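/- Let l : ℝ^p → ℝ be differentiable, l(0) the value at the zero vector, and let 1 ≤ k ≤ p. Suppose l is m₁-strongly concave and M₁-smooth on Ω₁, and M_k-smooth on Ω_k, with 0 < m₁ ≤ M₁ ≤ M_k. Then for any set S of size k, f(S) ≥ max{ 1/k , (m₁/(4M_k))·(3 + m₁/M₁) } · Σ_{j∈S} f({j}). -/

import Mathlib

open Finset

noncomputable section

/-- Number of nonzero coordinates (the "ℓ₀ norm") of a vector. -/
def spar {p : ℕ} (v : Fin p → ℝ) : ℕ := (Finset.univ.filter fun i => v i ≠ 0).card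

/-- Support of a vector, as a `Finset`. -/
def suppF {p : ℕ} (v : Fin p → ℝ) : Finset (Fin p) :=
  Finset.univ.filter fun i => v i ≠ 0

/-- `Ω_k`: pairs of `k`-sparse vectors differing in at most `k` coordinates. -/
def Omega {p : ℕ} (k : ℕ) : Set ((Fin p → ℝ) × (Fin p → ℝ)) :=
  {q | spar q.1 ≤ k ∧ spar q.2 ≤ k ∧ spar (q.1 - q.2) ≤ k}

/-- `Ω̃_k`: pairs of `k`-sparse vectors differing in at most one coordinate. -/
def OmegaT {p : ℕ} (k : ℕ) : Set ((Fin p → ℝ) × (Fin p → ℝ)) :=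
  {q | spar q.1 ≤ k ∧ spar q.2 ≤ k ∧ spar (q.1 - q.2) ≤ 1}

/-- `l` is `m`-strongly concave on `Ω`. -/
def RStrongConcaveOn {p : ℕ} (l : (Fin p → ℝ) → ℝ) (m : ℝ)
    (Ω : Set ((Fin p → ℝ) × (Fin p → ℝ))) : Prop :=
  ∀ x y : Fin p → ℝ, (x, y) ∈ Ω →
    l y - l x - fderiv ℝ l x (y - x) ≤ -(m / 2) * ∑ i, (y i - x i) ^ 2

/-- `l` is `M`-smooth on `Ω`. -/
def RSmoothOn {p : ℕ} (l : (Fin p → ℝ) → ℝ) (M : ℝ)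
    (Ω : Set ((Fin p → ℝ) × (Fin p → ℝ))) : Prop :=
  ∀ x y : Fin p → ℝ, (x, y) ∈ Ω →
    -(M / 2) * ∑ i, (y i - x i) ^ 2 ≤ l y - l x - fderiv ℝ l x (y - x)

lemma clm_apply_eq_sum {p : ℕ} (L : (Fin p → ℝ) →L[ℝ] ℝ) (v : Fin p → ℝ) :
    L v = ∑ i, v i * L (Pi.single i 1) := by
  have hv : v = ∑ i : Fin p, v i • (Pi.single i 1 : Fin p → ℝ) := by
    ext j
    simp [Finset.sum_apply, Pi.single_apply]
  conv_lhs => rw [hv]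
  rw [map_sum]
  simp [smul_eq_mul]

lemma spar_le_of_suppF {p : ℕ} (v : Fin p → ℝ) (S : Finset (Fin p))
    (h : suppF v ⊆ S) : spar v ≤ S.card :=
  Finset.card_le_card h

/-- the value of a `k`-set dominates a fraction of the sum of singleton values. -/
theorem set_value_vs_sum_of_singletons
    (p : ℕ) (l : (Fin p → ℝ) → ℝ) (hl : Differentiable ℝ l)
    (β : Finset (Fin p) → (Fin p → ℝ))
    (hβsupp : ∀ S : Finset (Fin p), suppF (β S) ⊆ S)
    (hβmax : ∀ S : Finset (Fin p), ∀ v : Fin p → ℝ, suppF v ⊆ S → l v ≤ l (β S))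
    (f : Finset (Fin p) → ℝ) (hf : ∀ S, f S = l (β S) - l 0)
    (k : ℕ) (hk1 : 1 ≤ k) (hkp : k ≤ p)
    (m₁ M₁ Mk : ℝ) (hm₁ : 0 < m₁) (hm₁M₁ : m₁ ≤ M₁) (hM₁Mk : M₁ ≤ Mk)
    (hconc1 : RStrongConcaveOn l m₁ (Omega 1))
    (hsmooth1 : RSmoothOn l M₁ (Omega 1))
    (hsmoothk : RSmoothOn l Mk (Omega k)) :
    ∀ S : Finset (Fin p), S.card = k →
      max (1 / (k : ℝ)) (m₁ / (4 * Mk) * (3 + m₁ / M₁)) * ∑ j ∈ S, f {j} ≤ f S := by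
  intro S hS
  have hM₁ : 0 < M₁ := lt_of_lt_of_le hm₁ hm₁M₁
  have hMk : 0 < Mk := lt_of_lt_of_le hM₁ hM₁Mk
  set L : (Fin p → ℝ) →L[ℝ] ℝ := fderiv ℝ l 0 with hL
  set g : Fin p → ℝ := fun j => L (Pi.single j 1) with hg
  have hspar0 : ∀ k' : ℕ, spar (0 : Fin p → ℝ) ≤ k' := by
    intro k'; simp [spar]
  have hfnonneg : ∀ j : Fin p, 0 ≤ f {j} := by
    intro j
    rw [hf]
    have h0 : suppF (0 : Fin p → ℝ) ⊆ {j} := by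
      intro i hi; simp [suppF] at hi
    have := hβmax {j} 0 h0
    linarith
  have hsum_nonneg : (0:ℝ) ≤ ∑ j ∈ S, f {j} :=
    Finset.sum_nonneg fun j _ => hfnonneg j
  have hmono : ∀ j ∈ S, f {j} ≤ f S := by
    intro j hj
    rw [hf, hf]
    have hsub : suppF (β {j}) ⊆ S := (hβsupp {j}).trans (by simpa using hj)
    have := hβmax S (β {j}) hsub
    linarith
  have hkpos : (0:ℝ) < (k:ℝ) := by exact_mod_cast hk1
  -- Part (a): 1/k bound
  have hA : (1 / (k:ℝ)) * ∑ j ∈ S, f {j} ≤ f S := by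
    have hsumle : ∑ j ∈ S, f {j} ≤ (k:ℝ) * f S := by
      calc ∑ j ∈ S, f {j} ≤ ∑ _j ∈ S, f S := Finset.sum_le_sum hmono
        _ = (S.card : ℝ) * f S := by rw [Finset.sum_const, nsmul_eq_mul]
        _ = (k:ℝ) * f S := by rw [hS]
    rw [div_mul_eq_mul_div, one_mul, div_le_iff₀ hkpos]
    linarith
  -- Step 1: singleton upper bound via strong concavity
  have step1 : ∀ j : Fin p, 2 * m₁ * f {j} ≤ (g j) ^ 2 := by
    intro j
    have hsupp := hβsupp {j}
    have hz : ∀ i, i ≠ j → β {j} i = 0 := by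
      intro i hi
      by_contra h
      have hmem : i ∈ suppF (β {j}) := by simp [suppF, h]
      have := hsupp hmem
      simp at this
      exact hi this
    set s : ℝ := β {j} j with hs
    have hsuppz : suppF ((0:Fin p → ℝ) - β {j}) ⊆ {j} := by
      intro i hi
      simp only [suppF, Finset.mem_filter] at hi
      by_contra hij
      simp at hij
      have := hz i hij
      simp [this] at hi
    have hmem : ((0 : Fin p → ℝ), β {j}) ∈ Omega (p := p) 1 := by
      refine ⟨hspar0 1, ?_, ?_⟩
      · simpa using spar_le_of_suppF (β {j}) {j} hsupp
      · simpa using spar_le_of_suppF _ {j} hsuppz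
    have hcon := hconc1 0 (β {j}) hmem
    rw [← hL] at hcon
    simp only [Pi.zero_apply, sub_zero] at hcon
    have hLval : L (β {j}) = s * g j := by
      rw [clm_apply_eq_sum]
      exact Finset.sum_eq_single j (fun i _ hij => by rw [hz i hij]; ring)
        (fun h => absurd (Finset.mem_univ j) h)
    have hsq : ∑ i, (β {j} i) ^ 2 = s ^ 2 :=
      Finset.sum_eq_single j (fun i _ hij => by rw [hz i hij]; ring)
        (fun h => absurd (Finset.mem_univ j) h)
    rw [hLval, hsq] at hcon
    have hfj : f {j} = l (β {j}) - l 0 := hf {j}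
    nlinarith [sq_nonneg (g j - m₁ * s), hm₁]
  -- Step 2: sum of squared gradient coordinates lower bounds f S via smoothness
  set T : ℝ := ∑ j ∈ S, (g j) ^ 2 with hT
  have hTnonneg : 0 ≤ T := Finset.sum_nonneg fun j _ => sq_nonneg _
  have step2 : T ≤ 2 * Mk * f S := by
    set v : Fin p → ℝ := fun i => if i ∈ S then g i / Mk else 0 with hv
    have hvsupp : suppF v ⊆ S := by
      intro i hi
      simp only [suppF, Finset.mem_filter, hv] at hi
      by_contra h
      simp [h] at hi
    have hvsupp' : suppF ((0 : Fin p → ℝ) - v) ⊆ S := by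
      intro i hi
      simp only [suppF, Finset.mem_filter, Pi.sub_apply, Pi.zero_apply] at hi
      apply hvsupp
      simp only [suppF, Finset.mem_filter]
      refine ⟨Finset.mem_univ i, ?_⟩
      intro h
      rw [h] at hi
      simp at hi
    have hmem : ((0 : Fin p → ℝ), v) ∈ Omega (p := p) k := by
      refine ⟨hspar0 k, ?_, ?_⟩
      · rw [← hS]; exact spar_le_of_suppF v S hvsupp
      · rw [← hS]; exact spar_le_of_suppF _ S hvsupp'
    have hsm := hsmoothk 0 v hmem
    rw [← hL] at hsm
    simp only [Pi.zero_apply, sub_zero] at hsm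
    have hLval : L v = T / Mk := by
      rw [clm_apply_eq_sum]
      have : ∀ i : Fin p, v i * L (Pi.single i 1) = if i ∈ S then (g i)^2 / Mk else 0 := by
        intro i
        by_cases h : i ∈ S <;> simp [hv, h, ← hg] <;> ring
      rw [Finset.sum_congr rfl fun i _ => this i, Finset.sum_ite_mem,
        Finset.univ_inter, hT, Finset.sum_div]
    have hsq : ∑ i, (v i) ^ 2 = T / Mk ^ 2 := by
      have : ∀ i : Fin p, (v i) ^ 2 = if i ∈ S then (g i)^2 / Mk^2 else 0 := by
        intro i
        by_cases h : i ∈ S <;> simp [hv, h] <;> ring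
      rw [Finset.sum_congr rfl fun i _ => this i, Finset.sum_ite_mem,
        Finset.univ_inter, hT, Finset.sum_div]
    rw [hLval, hsq] at hsm
    have hle : l v ≤ l (β S) := hβmax S v hvsupp
    have hfS : f S = l (β S) - l 0 := hf S
    have h1 : T / (2 * Mk) ≤ l v - l 0 := by
      have e1 : -(Mk / 2) * (T / Mk ^ 2) = -(T / (2 * Mk)) := by
        field_simp
      have e2 : T / Mk - T / (2 * Mk) = T / (2 * Mk) := by
        field_simp; ring
      rw [e1] at hsm
      linarith
    have h2 : T / (2 * Mk) ≤ f S := by linarith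
    rw [div_le_iff₀ (by positivity : (0:ℝ) < 2 * Mk)] at h2
    linarith
  -- Part (b)
  have hB : (m₁ / (4 * Mk) * (3 + m₁ / M₁)) * ∑ j ∈ S, f {j} ≤ f S := by
    have hble : m₁ / (4 * Mk) * (3 + m₁ / M₁) ≤ m₁ / Mk := by
      have h1 : m₁ / M₁ ≤ 1 := (div_le_one hM₁).mpr hm₁M₁
      have h2 : m₁ / (4 * Mk) * (3 + m₁ / M₁) ≤ m₁ / (4 * Mk) * 4 :=
        mul_le_mul_of_nonneg_left (by linarith) (by positivity)
      have h3 : m₁ / (4 * Mk) * 4 = m₁ / Mk := by field_simp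
      linarith
    have hsum1 : 2 * m₁ * ∑ j ∈ S, f {j} ≤ T := by
      rw [Finset.mul_sum, hT]
      exact Finset.sum_le_sum fun j _ => step1 j
    have hmain : (m₁ / Mk) * ∑ j ∈ S, f {j} ≤ f S := by
      rw [div_mul_eq_mul_div, div_le_iff₀ hMk]
      linarith [hsum1, step2]
    calc (m₁ / (4 * Mk) * (3 + m₁ / M₁)) * ∑ j ∈ S, f {j}
        ≤ (m₁ / Mk) * ∑ j ∈ S, f {j} :=
          mul_le_mul_of_nonneg_right hble hsum_nonneg
      _ ≤ f S := hmain
  rw [max_mul_of_nonneg _ _ hsum_nonneg]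
  exact max_le hA hB
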